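/- A commutative ring R is a DQ ring (i.e., the only finitely generated semi-regular ideal of R is R itself) if and only if every R-module is semi-regular flat. -/

import Mathlib

open CategoryTheory

noncomputable section

/-- An ideal is semi-regular if it contains a finitely generated subideal
with zero annihilator. -/
def Ideal.IsSemiregular {R : Type} [CommRing R] (I : Ideal R) : Prop :=
  ∃ J : Ideal R, J ≤ I ∧ J.FG ∧ Submodule.annihilator J = ⊥

/-- A module is semi-regular flat if `Tor₁(R/I, M) = 0` for every finitely generated
semi-regular ideal `I`. -/
def IsSemiregularFlat (R : Type) [CommRing R] (M : Type) [AddCommGroup M] [Module R M] : Prop :=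
  ∀ I : Ideal R, I.FG → I.IsSemiregular →
    Limits.IsZero (((Tor (ModuleCat R) 1).obj (ModuleCat.of R (R ⧸ I))).obj (ModuleCat.of R M))

namespace DQAux

open Limits TensorProduct

variable {R : Type} [CommRing R]

lemma subsingleton_tensor_left (M N : Type) [AddCommGroup M] [Module R M]
    [AddCommGroup N] [Module R N] [Subsingleton M] :
    Subsingleton (TensorProduct R M N) := by
  have hz : ∀ z : TensorProduct R M N, z = 0 := fun z => by
    induction z using TensorProduct.induction_on with
    | zero => rfl
    | tmul m n => rw [Subsingleton.elim m 0, TensorProduct.zero_tmul]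
    | add a b ha hb => rw [ha, hb, add_zero]
  exact ⟨fun a b => (hz a).trans (hz b).symm⟩

/-- The map `R →ₗ Rⁿ`, `r ↦ (x i * r)ᵢ`. -/
def piMap {n : ℕ} (x : Fin n → R) : R →ₗ[R] (Fin n → R) :=
  LinearMap.pi fun i => x i • LinearMap.id

@[simp] lemma piMap_apply {n : ℕ} (x : Fin n → R) (r : R) (i : Fin n) :
    piMap x r i = x i * r := by
  simp [piMap, smul_eq_mul]

/-- The cokernel of `piMap x`. -/
abbrev resM {n : ℕ} (x : Fin n → R) : Type := (Fin n → R) ⧸ LinearMap.range (piMap x)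

/-- Objects of the two-term resolution. -/
def resX (R : Type) [CommRing R] (n : ℕ) : ℕ → ModuleCat R
  | 0 => ModuleCat.of R (Fin n → R)
  | 1 => ModuleCat.of R R
  | _ + 2 => ModuleCat.of R PUnit

/-- Differentials of the two-term resolution. -/
def resD {n : ℕ} (x : Fin n → R) : ∀ k, resX R n (k + 1) ⟶ resX R n k
  | 0 => ModuleCat.ofHom (piMap x)
  | _ + 1 => 0

/-- The two-term complex `⋯ → 0 → R → Rⁿ`. -/
def resC {n : ℕ} (x : Fin n → R) : ChainComplex (ModuleCat R) ℕ :=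
  ChainComplex.of (resX R n) (resD x) (fun _ => zero_comp)

@[simp] lemma resC_d_one_zero {n : ℕ} (x : Fin n → R) :
    (resC x).d 1 0 = ModuleCat.ofHom (piMap x) :=
  ChainComplex.of_d (resX R n) (resD x) 0

@[simp] lemma resC_d_succ {n : ℕ} (x : Fin n → R) (k : ℕ) :
    (resC x).d (k + 2) (k + 1) = 0 :=
  ChainComplex.of_d _ _ (k + 1)

lemma lTensor_piMap_zero (I : Ideal R) {n : ℕ} (x : Fin n → R) (hxI : ∀ i, x i ∈ I) :
    LinearMap.lTensor (R ⧸ I) (piMap x) = 0 := by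
  apply TensorProduct.ext'
  intro q r
  obtain ⟨a, rfl⟩ := Submodule.Quotient.mk_surjective _ q
  rw [LinearMap.lTensor_tmul]
  have h1 : piMap x r = ∑ i, (x i * r) • fun j => if i = j then (1 : R) else 0 := by
    conv_lhs => rw [pi_eq_sum_univ (piMap x r)]
    exact Finset.sum_congr rfl fun i _ => by rw [piMap_apply]
  rw [h1, tmul_sum]
  refine Finset.sum_eq_zero fun i _ => ?_
  have hz' : ((x i * r) • (Submodule.Quotient.mk a : R ⧸ I)) = 0 := by
    rw [← Submodule.Quotient.mk_smul, Submodule.Quotient.mk_eq_zero]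
    exact I.mul_mem_right a (I.mul_mem_right r (hxI i))
  rw [tmul_smul, smul_tmul', hz', TensorProduct.zero_tmul]

lemma resC_d_comp_mkQ {n : ℕ} (x : Fin n → R) :
    (resC x).d 1 0 ≫ ModuleCat.ofHom (LinearMap.range (piMap x)).mkQ = 0 := by
  rw [resC_d_one_zero]
  apply ModuleCat.hom_ext
  apply LinearMap.ext
  intro r
  exact (Submodule.Quotient.mk_eq_zero _).2 ⟨r, rfl⟩

/-- The two-term projective resolution of the cokernel of `piMap x`. -/
def resolution {n : ℕ} (x : Fin n → R) (hinj : Function.Injective (piMap x)) :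
    ProjectiveResolution (ModuleCat.of R (resM x)) where
  complex := resC x
  projective k := by
    match k with
    | 0 => exact (IsProjective.iff_projective _).mp inferInstance
    | 1 => exact (IsProjective.iff_projective _).mp inferInstance
    | k + 2 => exact (IsProjective.iff_projective _).mp inferInstance
  π := (ChainComplex.toSingle₀Equiv (resC x) (ModuleCat.of R (resM x))).symm
    ⟨ModuleCat.ofHom (LinearMap.range (piMap x)).mkQ, resC_d_comp_mkQ x⟩
  quasiIso := ⟨fun k => by
    cases k with
    | zero =>
      rw [ChainComplex.quasiIsoAt₀_iff, ShortComplex.quasiIso_iff_of_zeros']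
      · have hex2 : (ShortComplex.mk (ModuleCat.ofHom (piMap x))
            (ModuleCat.ofHom (LinearMap.range (piMap x)).mkQ)
            ((resC_d_one_zero x) ▸ resC_d_comp_mkQ x)).Exact := by
          rw [ShortComplex.moduleCat_exact_iff]
          intro v hv
          obtain ⟨r, hr⟩ := (Submodule.Quotient.mk_eq_zero (LinearMap.range (piMap x)) (x := v)).1 hv
          exact ⟨r, hr⟩
        have hepi : Epi (ModuleCat.ofHom (LinearMap.range (piMap x)).mkQ) := by
          rw [ModuleCat.epi_iff_surjective]
          exact Submodule.mkQ_surjective _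
        refine (ShortComplex.exact_and_epi_g_iff_of_iso ?_).2 ⟨hex2, hepi⟩
        refine ShortComplex.isoMk (Iso.refl _) (Iso.refl _) (Iso.refl _) ?_ ?_
        · dsimp
          rfl
        · dsimp
          rfl
      all_goals rfl
    | succ k =>
      rw [quasiIsoAt_iff_exactAt']
      · rw [HomologicalComplex.exactAt_iff' _ (k + 2) (k + 1) k (by simp) (by simp),
          ShortComplex.moduleCat_exact_iff]
        match k with
        | 0 =>
          intro r hr
          refine ⟨0, ?_⟩
          have h' : ((resC x).d 1 0) r = 0 := hr
          rw [resC_d_one_zero] at h'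
          have : r = 0 := hinj (by rw [show piMap x r = 0 from h']; exact (map_zero (piMap x)).symm)
          rw [this, map_zero]
        | k + 1 =>
          intro v hv
          exact ⟨0, @Subsingleton.elim PUnit _ _ _⟩
      · exact ChainComplex.exactAt_succ_single_obj _ _⟩

end DQAux

open DQAux Limits TensorProduct MonoidalCategory in
set_option maxHeartbeats 1000000 in
/-- `R` is a DQ ring (its only finitely generated semi-regular ideal is `R`)
iff every `R`-module is semi-regular flat. -/
theorem isDQ_iff_all_semiregularFlat (R : Type) [CommRing R] :
    (∀ I : Ideal R, I.FG → I.IsSemiregular → I = ⊤) ↔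
      ∀ (M : Type) (_ : AddCommGroup M) (_ : Module R M), IsSemiregularFlat R M := by
  constructor
  · intro h M _ _ I hfg hsr
    have hI := h I hfg hsr
    subst hI
    haveI : Subsingleton (R ⧸ (⊤ : Ideal R)) :=
      Submodule.Quotient.subsingleton_iff.mpr rfl
    set P := ProjectiveResolution.of (ModuleCat.of R M) with hP
    set Ft := (tensoringLeft (ModuleCat R)).obj
      (ModuleCat.of R (R ⧸ (⊤ : Ideal R))) with hFt
    have e := P.isoLeftDerivedObj Ft 1
    have h1 : IsZero ((HomologicalComplex.homologyFunctor _ _ 1).obj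
        ((Ft.mapHomologicalComplex _).obj P.complex)) :=
      ShortComplex.isZero_homology_of_isZero_X₂
        (((Ft.mapHomologicalComplex _).obj P.complex).sc 1)
        (@ModuleCat.isZero_of_subsingleton R _ _
          (subsingleton_tensor_left (R ⧸ (⊤ : Ideal R)) (P.complex.X 1)))
    exact h1.of_iso e
  · intro h I hfg hsr
    obtain ⟨J, hJI, hJfg, hann⟩ := hsr
    obtain ⟨n, x, hx⟩ := Submodule.fg_iff_exists_fin_generating_family.mp hJfg
    have hxI : ∀ i, x i ∈ I := fun i =>
      hJI (hx ▸ Submodule.subset_span (Set.mem_range_self i))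
    have hinj : Function.Injective (piMap x) := by
      rw [← LinearMap.ker_eq_bot]
      refine (Submodule.eq_bot_iff _).2 fun r hr => ?_
      have hr' : piMap x r = 0 := hr
      have hmem : r ∈ Submodule.annihilator J := by
        rw [← hx, Submodule.mem_annihilator_span]
        rintro ⟨m, i, rfl⟩
        have := congr_fun hr' i
        simp only [piMap_apply, Pi.zero_apply] at this
        simpa [smul_eq_mul, mul_comm] using this
      rw [hann] at hmem
      exact hmem
    have hz := h (resM x) inferInstance inferInstance I hfg ⟨J, hJI, hJfg, hann⟩
    set F := (tensoringLeft (ModuleCat R)).obj (ModuleCat.of R (R ⧸ I)) with hF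
    set P := resolution x hinj with hP
    set K := (F.mapHomologicalComplex _).obj P.complex with hK
    have e := P.isoLeftDerivedObj F 1
    have hzh : IsZero ((HomologicalComplex.homologyFunctor _ _ 1).obj K) :=
      IsZero.of_iso hz e.symm
    have hex : K.ExactAt 1 :=
      (HomologicalComplex.exactAt_iff_isZero_homology _ _).2 hzh
    rw [HomologicalComplex.exactAt_iff' _ 2 1 0 (by simp) (by simp),
      ShortComplex.moduleCat_exact_iff] at hex
    -- the differential `K.d 1 0` is zero, since each `x i` kills `R ⧸ I`
    have hg : (K.sc' 2 1 0).g = 0 := by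
      show F.map ((resC x).d 1 0) = 0
      rw [resC_d_one_zero]
      exact ModuleCat.hom_ext (lTensor_piMap_zero I x hxI)
    have hf : (K.sc' 2 1 0).f = 0 := by
      show F.map ((resC x).d 2 1) = 0
      rw [resC_d_succ, Functor.map_zero]
    haveI : Subsingleton (TensorProduct R (R ⧸ I) R) := by
      have hall : ∀ z : TensorProduct R (R ⧸ I) R, z = 0 := by
        intro z
        obtain ⟨y, hy⟩ := hex z (by rw [hg]; rfl)
        rw [hf] at hy
        have hy2 := hy.symm
        simp at hy2
        exact hy2
      exact ⟨fun a b => (hall a).trans (hall b).symm⟩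
    have hs : Subsingleton (R ⧸ I) :=
      Equiv.subsingleton ((TensorProduct.rid R (R ⧸ I)).symm.toEquiv)
    exact Submodule.Quotient.subsingleton_iff.mp hs

end
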